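/- Let m : ℤ → ℤ → ℝ satisfy m(x,y) ≥ 0 for all x, y, m(x,y) = 0 whenever |x − y| > 1, and m(x,x+1) > 0 and m(x,x−1) > 0 for all x. Define m^{(1)} = m and m^{(n+1)}(x,y) = Σ_{z ∈ {y−1,y,y+1}} m^{(n)}(x,z)·m(z,y). For N ≥ 1 let m_N(x,y) = m(x,y) if both x, y ∈ [−N, N] ∩ ℤ and m_N(x,y) = 0 otherwise, with iterates m_N^{(n)} defined by the same recursion from m_N. Then limsup_{n→∞} (m^{(n)}(0,0))^{1/n} = sup_{N≥1} limsup_{n→∞} (m_N^{(n)}(0,0))^{1/n}, with values in [0,∞]. -/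
import Mathlib


/-- Iterates of a tridiagonal kernel on `ℤ`: `iter m n = m^{(n+1)}`, i.e. `iter m 0 = m`
and `m^{(n+1)}(x,y) = Σ_{z ∈ {y−1,y,y+1}} m^{(n)}(x,z)·m(z,y)`. -/
noncomputable def iter (m : ℤ → ℤ → ℝ) : ℕ → ℤ → ℤ → ℝ
  | 0 => m
  | n + 1 => fun x y =>
      iter m n x (y - 1) * m (y - 1) y + iter m n x y * m y y
        + iter m n x (y + 1) * m (y + 1) y

/-- Restriction of the kernel `m` to the box `[−N, N]`: entries outside the box vanish. -/
noncomputable def restrictBox (m : ℤ → ℤ → ℝ) (N : ℕ) : ℤ → ℤ → ℝ :=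
  fun x y => if |x| ≤ (N : ℤ) ∧ |y| ≤ (N : ℤ) then m x y else 0

lemma iter_nonneg (w : ℤ → ℤ → ℝ) (h : ∀ x y, 0 ≤ w x y) :
    ∀ n (x y : ℤ), 0 ≤ iter w n x y := by
  intro n
  induction n with
  | zero => exact h
  | succ n ih =>
    intro x y
    simp only [iter]
    have a1 := ih x (y-1); have a2 := ih x y; have a3 := ih x (y+1)
    have b1 := h (y-1) y; have b2 := h y y; have b3 := h (y+1) y
    nlinarith

lemma iter_vanish (w : ℤ → ℤ → ℝ) (hnb : ∀ x y : ℤ, 1 < |x - y| → w x y = 0) :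
    ∀ (n : ℕ) (x y : ℤ), (n : ℤ) + 1 < |x - y| → iter w n x y = 0 := by
  intro n
  induction n with
  | zero =>
    intro x y h
    exact hnb x y (by push_cast at h; linarith)
  | succ n ih =>
    intro x y h
    push_cast at h
    have key : ∀ z : ℤ, |z - y| ≤ 1 → (n : ℤ) + 1 < |x - z| := by
      intro z hz
      have h1 : |x - y| ≤ |x - z| + |z - y| := abs_sub_le x z y
      linarith
    simp only [iter]
    rw [ih x (y-1) (key _ (by simp)), ih x y (key _ (by simp)),
      ih x (y+1) (key _ (by simp))]
    ring

lemma iter_super (w : ℤ → ℤ → ℝ) (hnn : ∀ x y, 0 ≤ w x y)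
    (hnb : ∀ x y : ℤ, 1 < |x - y| → w x y = 0) :
    ∀ (b a : ℕ) (x z y : ℤ), iter w a x z * iter w b z y ≤ iter w (a + b + 1) x y := by
  intro b
  induction b with
  | zero =>
    intro a x z y
    simp only [iter]
    have a1 := iter_nonneg w hnn a x (y-1)
    have a2 := iter_nonneg w hnn a x y
    have a3 := iter_nonneg w hnn a x (y+1)
    have b1 := hnn (y-1) y; have b2 := hnn y y; have b3 := hnn (y+1) y
    by_cases hz : |z - y| ≤ 1
    · have : z = y - 1 ∨ z = y ∨ z = y + 1 := by
        rcases abs_le.mp hz with ⟨h1, h2⟩; omega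
      rcases this with h | h | h <;> subst h <;> nlinarith
    · rw [hnb z y (by linarith [not_le.mp hz])]
      nlinarith
  | succ b ih =>
    intro a x z y
    have e : a + (b + 1) + 1 = (a + b + 1) + 1 := by omega
    rw [e]
    have expand : ∀ (k : ℕ) (x y : ℤ), iter w (k+1) x y =
        iter w k x (y - 1) * w (y - 1) y + iter w k x y * w y y
          + iter w k x (y + 1) * w (y + 1) y := fun _ _ _ => rfl
    rw [expand (a+b+1) x y, expand b z y]
    have h1 := ih a x z (y - 1)
    have h2 := ih a x z y
    have h3 := ih a x z (y + 1)
    have b1 := hnn (y-1) y; have b2 := hnn y y; have b3 := hnn (y+1) y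
    have t1 := mul_le_mul_of_nonneg_right h1 b1
    have t2 := mul_le_mul_of_nonneg_right h2 b2
    have t3 := mul_le_mul_of_nonneg_right h3 b3
    nlinarith

lemma iter_mono (w w' : ℤ → ℤ → ℝ) (hw : ∀ x y, 0 ≤ w x y)
    (h : ∀ x y, w x y ≤ w' x y) :
    ∀ (n : ℕ) (x y : ℤ), iter w n x y ≤ iter w' n x y := by
  intro n
  induction n with
  | zero => exact h
  | succ n ih =>
    intro x y
    simp only [iter]
    have hw' : ∀ x y, 0 ≤ w' x y := fun x y => le_trans (hw x y) (h x y)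
    have t : ∀ z : ℤ, iter w n x z * w z y ≤ iter w' n x z * w' z y := fun z =>
      mul_le_mul (ih x z) (h z y) (hw z y) (iter_nonneg w' hw' n x z)
    have := t (y-1); have := t y; have := t (y+1)
    linarith

lemma restrictBox_nonneg (m : ℤ → ℤ → ℝ) (hnn : ∀ x y, 0 ≤ m x y) (N : ℕ) :
    ∀ x y, 0 ≤ restrictBox m N x y := by
  intro x y; unfold restrictBox; split <;> [exact hnn x y; exact le_rfl]
  
lemma restrictBox_nb (m : ℤ → ℤ → ℝ) (hnb : ∀ x y : ℤ, 1 < |x - y| → m x y = 0) (N : ℕ) :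
    ∀ x y : ℤ, 1 < |x - y| → restrictBox m N x y = 0 := by
  intro x y h; unfold restrictBox; split <;> [exact hnb x y h; rfl]

lemma restrictBox_le (m : ℤ → ℤ → ℝ) (hnn : ∀ x y, 0 ≤ m x y) (N : ℕ) :
    ∀ x y, restrictBox m N x y ≤ m x y := by
  intro x y; unfold restrictBox; split <;> [exact le_rfl; exact hnn x y]

lemma iter_restrict (m : ℤ → ℤ → ℝ) (hnb : ∀ x y : ℤ, 1 < |x - y| → m x y = 0) (N : ℕ) :
    ∀ (n : ℕ) (x y : ℤ), |x| + ((n : ℤ) + 1) ≤ (N : ℤ) →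
      iter (restrictBox m N) n x y = iter m n x y := by
  intro n
  induction n with
  | zero =>
    intro x y h
    push_cast at h
    have hx : |x| ≤ (N : ℤ) := by have := abs_nonneg x; linarith
    show restrictBox m N x y = m x y
    unfold restrictBox
    by_cases hy : |y| ≤ (N : ℤ)
    · rw [if_pos ⟨hx, hy⟩]
    · rw [if_neg (by tauto)]
      have h1 : |y| - |x| ≤ |y - x| := abs_sub_abs_le_abs_sub y x
      rw [abs_sub_comm] at h1
      exact (hnb x y (by linarith [not_le.mp hy])).symm
  | succ n ih =>
    intro x y h
    push_cast at h
    simp only [iter]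
    have key : ∀ z : ℤ, |z - y| ≤ 1 →
        iter (restrictBox m N) n x z * restrictBox m N z y = iter m n x z * m z y := by
      intro z hz
      by_cases hc : (n : ℤ) + 1 < |x - z|
      · rw [iter_vanish _ (restrictBox_nb m hnb N) n x z hc, iter_vanish m hnb n x z hc]
        ring
      · push_neg at hc
        have hzx : |z| - |x| ≤ |z - x| := abs_sub_abs_le_abs_sub z x
        rw [abs_sub_comm] at hzx
        have hzN : |z| ≤ (N : ℤ) := by linarith
        have hyz : |y| - |z| ≤ |y - z| := abs_sub_abs_le_abs_sub y z
        rw [abs_sub_comm] at hyz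
        have hyN : |y| ≤ (N : ℤ) := by linarith
        rw [ih x z (by push_cast; linarith)]
        unfold restrictBox
        rw [if_pos ⟨hzN, hyN⟩]
    rw [key (y-1) (by simp), key y (by simp), key (y+1) (by simp)]

/-- For a nonnegative nearest-neighbour kernel `m` on `ℤ` with
`m(x,x+1) > 0` and `m(x,x−1) > 0` for all `x`, the spectral radius at the origin
satisfies the finite-box approximation property
`limsup_n (m^{(n)}(0,0))^{1/n} = sup_{N≥1} limsup_n (m_N^{(n)}(0,0))^{1/n}` in `[0,∞]`. -/
theorem stmt11 (m : ℤ → ℤ → ℝ)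
    (hnn : ∀ x y, 0 ≤ m x y)
    (hnb : ∀ x y : ℤ, 1 < |x - y| → m x y = 0)
    (hup : ∀ x, 0 < m x (x + 1)) (hdown : ∀ x, 0 < m x (x - 1)) :
    Filter.limsup
        (fun n : ℕ => ENNReal.ofReal ((iter m n 0 0) ^ (((n : ℝ) + 1)⁻¹)))
        Filter.atTop
      = ⨆ (N : ℕ) (_ : 1 ≤ N),
          Filter.limsup
            (fun n : ℕ =>
              ENNReal.ofReal ((iter (restrictBox m N) n 0 0) ^ (((n : ℝ) + 1)⁻¹)))
            Filter.atTop := by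
  apply le_antisymm
  · -- limsup ≤ sup over boxes
    have key : ∀ k : ℕ,
        ENNReal.ofReal ((iter m (2*k+1) 0 0) ^ ((((2*k+1 : ℕ) : ℝ) + 1)⁻¹))
          ≤ ⨆ (N : ℕ) (_ : 1 ≤ N),
              Filter.limsup
                (fun n : ℕ =>
                  ENNReal.ofReal ((iter (restrictBox m N) n 0 0) ^ (((n : ℝ) + 1)⁻¹)))
                Filter.atTop := by
      intro k
      set d : ℕ := 2*k+1 with hd_def
      set N : ℕ := 2*k+2 with hN_def
      have hnnN : ∀ x y, 0 ≤ restrictBox m N x y := restrictBox_nonneg m hnn N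
      have hnbN : ∀ x y : ℤ, 1 < |x - y| → restrictBox m N x y = 0 :=
        restrictBox_nb m hnb N
      have hd : iter (restrictBox m N) d 0 0 = iter m d 0 0 := by
        apply iter_restrict m hnb N d 0 0
        simp only [abs_zero]
        push_cast
        omega
      have h0 : (0:ℝ) ≤ iter m d 0 0 := iter_nonneg m hnn d 0 0
      -- power bound along the subsequence j*(d+1)+d
      have pow_bound : ∀ j : ℕ,
          (iter m d 0 0) ^ (j+1) ≤ iter (restrictBox m N) (j*(d+1)+d) 0 0 := by
        intro j
        induction j with
        | zero => simpa using hd.symm.le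
        | succ j ihj =>
          have e : (j+1)*(d+1)+d = (j*(d+1)+d) + d + 1 := by ring
          rw [e]
          calc (iter m d 0 0) ^ (j+1+1) = (iter m d 0 0) ^ (j+1) * iter m d 0 0 := by ring
            _ ≤ iter (restrictBox m N) (j*(d+1)+d) 0 0 * iter (restrictBox m N) d 0 0 := by
                rw [hd]
                exact mul_le_mul_of_nonneg_right ihj h0
            _ ≤ iter (restrictBox m N) ((j*(d+1)+d) + d + 1) 0 0 :=
                iter_super (restrictBox m N) hnnN hnbN d (j*(d+1)+d) 0 0 0
      -- hence the box-N limsup dominates (iter m d 0 0)^(1/(d+1))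
      have hfreq : ENNReal.ofReal ((iter m d 0 0) ^ (((d : ℕ) : ℝ) + 1)⁻¹)
          ≤ Filter.limsup
              (fun n : ℕ =>
                ENNReal.ofReal ((iter (restrictBox m N) n 0 0) ^ (((n : ℝ) + 1)⁻¹)))
              Filter.atTop := by
        apply Filter.le_limsup_of_frequently_le'
        rw [Filter.frequently_atTop]
        intro a
        refine ⟨a*(d+1)+d, by nlinarith, ?_⟩
        apply ENNReal.ofReal_le_ofReal
        set n : ℕ := a*(d+1)+d with hn_def
        have e1 : ((n : ℝ) + 1) = ((a : ℝ) + 1) * ((d : ℝ) + 1) := by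
          rw [hn_def]; push_cast; ring
        have hdpos : (0:ℝ) < (d : ℝ) + 1 := by positivity
        have hapos : (0:ℝ) < (a : ℝ) + 1 := by positivity
        calc (iter m d 0 0) ^ (((d : ℕ) : ℝ) + 1)⁻¹
            = ((iter m d 0 0) ^ (a+1 : ℕ)) ^ (((n : ℝ) + 1)⁻¹) := by
              rw [← Real.rpow_natCast (iter m d 0 0) (a+1), ← Real.rpow_mul h0]
              congr 1
              rw [e1]
              push_cast
              rw [mul_inv]
              field_simp
          _ ≤ (iter (restrictBox m N) n 0 0) ^ (((n : ℝ) + 1)⁻¹) :=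
              Real.rpow_le_rpow (pow_nonneg h0 _) (pow_bound a) (by positivity)
      exact le_trans hfreq (le_iSup₂_of_le N (by omega) le_rfl)
    refine Filter.limsup_le_of_le (by isBoundedDefault)
      (Filter.Eventually.of_forall fun n => ?_)
    refine le_trans ?_ (key n)
    apply ENNReal.ofReal_le_ofReal
    have h0 : (0:ℝ) ≤ iter m n 0 0 := iter_nonneg m hnn n 0 0
    have hs : iter m n 0 0 * iter m n 0 0 ≤ iter m (2*n+1) 0 0 := by
      have := iter_super m hnn hnb n n 0 0 0
      rwa [show n + n + 1 = 2*n+1 from by ring] at this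
    set E : ℝ := (((2*n+1 : ℕ) : ℝ) + 1)⁻¹ with hE_def
    have hEpos : (0:ℝ) < E := by rw [hE_def]; positivity
    have e2 : ((n : ℝ) + 1)⁻¹ = 2 * E := by
      rw [hE_def]; push_cast
      rw [eq_comm, mul_inv_eq_iff_eq_mul₀ (by positivity)]
      field_simp
      ring
    calc (iter m n 0 0) ^ (((n : ℝ) + 1)⁻¹)
        = (iter m n 0 0 * iter m n 0 0) ^ E := by
          rw [e2, ← pow_two, ← Real.rpow_natCast (iter m n 0 0) 2,
            ← Real.rpow_mul h0]
          norm_num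
      _ ≤ (iter m (2*n+1) 0 0) ^ E :=
          Real.rpow_le_rpow (mul_nonneg h0 h0) hs hEpos.le
  · -- sup over boxes ≤ limsup
    refine iSup₂_le fun N _ => ?_
    refine Filter.limsup_le_limsup (Filter.Eventually.of_forall fun n => ?_)
    apply ENNReal.ofReal_le_ofReal
    exact Real.rpow_le_rpow (iter_nonneg _ (restrictBox_nonneg m hnn N) n 0 0)
      (iter_mono _ m (restrictBox_nonneg m hnn N) (restrictBox_le m hnn N) n 0 0)
      (by positivity)
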